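/- Let L be a purely transcendental field extension of a field K. Then the extension K ⊆ L satisfies the linear acyclic matching property: for every pair A and B of nonzero K-subspaces of L of the same finite dimension with AB ∩ A = {0}, there exists at least one acyclic matching from A to B. -/

import Mathlib

/-- A field extension `K ⊆ L` is purely transcendental if `L` is generated, as a field
extension of `K`, by an algebraically independent set. -/
def IsPurelyTranscendental (K L : Type*) [Field K] [Field L] [Algebra K L] : Prop :=
  ∃ S : Set L, AlgebraicIndependent K ((↑) : S → L) ∧ IntermediateField.adjoin K S = ⊤

/-- An ordered basis `v` of a `K`-subspace `A` of `L` is matched to an ordered basis `w`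
of a `K`-subspace `B` of `L` if for each `i`, `(v i)⁻¹ • A ∩ B` is contained in the
`K`-span of `{w j : j ≠ i}`. -/
def MatchedBases {K L : Type*} [Field K] [Field L] [Algebra K L]
    {A B : Submodule K L} {n : ℕ} (v : Module.Basis (Fin n) K A) (w : Module.Basis (Fin n) K B) : Prop :=
  ∀ i : Fin n, ∀ y : L, y ∈ B → (∃ x ∈ A, y = ((v i : L))⁻¹ * x) →
    y ∈ Submodule.span K ((fun j : Fin n => (w j : L)) '' {j : Fin n | j ≠ i})

/-- A strong matching from `A` to `B` is a `K`-linear isomorphism `f : A → B` such that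
every ordered basis `v` of `A` is matched to the ordered basis `f (v)` of `B`. -/
def IsStrongMatching {K L : Type*} [Field K] [Field L] [Algebra K L]
    {A B : Submodule K L} (f : A ≃ₗ[K] B) : Prop :=
  ∀ v : Module.Basis (Fin (Module.finrank K A)) K A, MatchedBases v (v.map f)

/-- Two `K`-linear isomorphisms `f, g : A → B` are equivalent if there is a `K`-linear
automorphism `φ : A → A` with `a * f a = φ a * g (φ a)` for all `a ∈ A`. -/
def AreEquivalent {K L : Type*} [Field K] [Field L] [Algebra K L]
    {A B : Submodule K L} (f g : A ≃ₗ[K] B) : Prop :=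
  ∃ φ : A ≃ₗ[K] A, ∀ a : A, (a : L) * ((f a : ↥B) : L) =
    ((φ a : ↥A) : L) * ((g (φ a) : ↥B) : L)

/-- An acyclic matching from `A` to `B` is a strong matching `f : A → B` such that every
strong matching `g : A → B` equivalent to `f` satisfies `f = c • g` for some `c ∈ K`. -/
def IsAcyclicLinearMatching {K L : Type*} [Field K] [Field L] [Algebra K L]
    {A B : Submodule K L} (f : A ≃ₗ[K] B) : Prop :=
  IsStrongMatching f ∧
    ∀ g : A ≃ₗ[K] B, IsStrongMatching g → AreEquivalent g f →
      ∃ c : K, ∀ a : A, ((f a : ↥B) : L) = algebraMap K L c * ((g a : ↥B) : L)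



private lemma mv_isUnit_fin' {R : Type*} [CommRing R] [IsDomain R] :
    ∀ (m : ℕ) (p : MvPolynomial (Fin m) R), IsUnit p → ∃ c : R, p = MvPolynomial.C c := by
  intro m
  induction m with
  | zero =>
    intro p _
    exact ⟨MvPolynomial.constantCoeff p, MvPolynomial.eq_C_of_isEmpty p⟩
  | succ n ih =>
    intro p hp
    have hp' : IsUnit (MvPolynomial.finSuccEquiv R n p) := hp.map (MvPolynomial.finSuccEquiv R n)
    obtain ⟨r, hru, hrp⟩ := Polynomial.isUnit_iff.mp hp'
    obtain ⟨c, rfl⟩ := ih r hru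
    refine ⟨c, (MvPolynomial.finSuccEquiv R n).injective ?_⟩
    rw [← hrp]
    simp [MvPolynomial.finSuccEquiv_apply]

private lemma mv_isUnit_C' {R σ : Type*} [CommRing R] [IsDomain R]
    (p q : MvPolynomial σ R) (h : p * q = 1) : ∃ c : R, p = MvPolynomial.C c := by
  classical
  obtain ⟨s, p', q', rfl, rfl⟩ := MvPolynomial.exists_finset_rename₂ p q
  have hinj : Function.Injective
      (MvPolynomial.rename (R := R) (Subtype.val : { x // x ∈ s } → σ)) :=
    MvPolynomial.rename_injective _ Subtype.val_injective
  have h' : p' * q' = 1 := by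
    apply hinj
    rw [map_mul, h, map_one]
  set e := MvPolynomial.renameEquiv R s.equivFin
  have h'' : (e p') * (e q') = 1 := by rw [← map_mul, h', map_one]
  obtain ⟨c, hc⟩ := mv_isUnit_fin' s.card (e p') (IsUnit.of_mul_eq_one _ h'')
  have hp' : p' = MvPolynomial.C c := by
    apply e.injective
    rw [hc]
    simp [e]
  rw [hp']
  exact ⟨c, by simp⟩



private lemma alg_of_mul_mem' {K L : Type*} [Field K] [Field L] [Algebra K L]
    (A : Submodule K L) [FiniteDimensional K A] {a₀ : L} (ha₀A : a₀ ∈ A) (ha₀ : a₀ ≠ 0)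
    (u : L) (h : ∀ x ∈ A, u * x ∈ A) : IsAlgebraic K u := by
  by_contra htr
  have htr' : Transcendental K u := htr
  have hmem : ∀ p : Polynomial K, Polynomial.aeval u p * a₀ ∈ A := by
    intro p
    induction p using Polynomial.induction_on with
    | C c =>
        rw [Polynomial.aeval_C, ← Algebra.smul_def]
        exact A.smul_mem c ha₀A
    | add p q hp hq => rw [map_add, add_mul]; exact A.add_mem hp hq
    | monomial n c hp =>
        have he : (Polynomial.aeval u) (Polynomial.C c * Polynomial.X ^ (n + 1)) * a₀ =
            u * ((Polynomial.aeval u) (Polynomial.C c * Polynomial.X ^ n) * a₀) := by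
          simp [pow_succ]; ring
        rw [he]
        exact h _ hp
  let T : Polynomial K →ₗ[K] A :=
    { toFun := fun p => ⟨Polynomial.aeval u p * a₀, hmem p⟩
      map_add' := fun p q => by ext; simp [add_mul]
      map_smul' := fun c p => by ext; simp [Algebra.smul_def]; ring }
  have hTinj : Function.Injective T := by
    intro p q hpq
    have h0 : T (p - q) = 0 := by rw [map_sub, hpq, sub_self]
    have h0' : Polynomial.aeval u (p - q) * a₀ = 0 := congrArg Subtype.val h0
    have h1 : Polynomial.aeval u (p - q) = 0 := by
      rcases mul_eq_zero.mp h0' with h' | h'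
      · exact h'
      · exact absurd h' ha₀
    have h2 : p - q = 0 := transcendental_iff.mp htr' _ h1
    exact sub_eq_zero.mp h2
  haveI : FiniteDimensional K (Polynomial K) := FiniteDimensional.of_injective T hTinj
  have : Fintype ℕ := IsNoetherian.fintypeBasisIndex (Polynomial.basisMonomials K)
  exact not_finite ℕ

set_option maxHeartbeats 1000000 in
set_option synthInstance.maxHeartbeats 400000 in
private lemma alg_mem_range' {K L : Type*} [Field K] [Field L] [Algebra K L]
    (hKL : IsPurelyTranscendental K L) {u : L} (hu : IsAlgebraic K u) :
    ∃ k : K, algebraMap K L k = u := by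
  classical
  obtain ⟨S, hind, htop⟩ := hKL
  letI : Algebra (MvPolynomial S K) L :=
    ((MvPolynomial.aeval (Subtype.val : S → L)).toRingHom).toAlgebra
  have halg : algebraMap (MvPolynomial S K) L =
      (MvPolynomial.aeval (Subtype.val : S → L)).toRingHom := rfl
  haveI : IsScalarTower K (MvPolynomial S K) L :=
    IsScalarTower.of_algebraMap_eq fun c => by
      rw [halg]; simp
  have hinj : Function.Injective (algebraMap (MvPolynomial S K) L) := by
    rw [halg]; exact algebraicIndependent_iff_injective_aeval.mp hind
  haveI : IsFractionRing (MvPolynomial S K) L := by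
    refine { map_units := ?_, surj := ?_, exists_of_eq := ?_ }
    · intro y
      refine isUnit_iff_ne_zero.mpr fun h0 => ?_
      exact nonZeroDivisors.coe_ne_zero y (hinj (by rw [h0, map_zero]))
    · intro z
      have hz : z ∈ IntermediateField.adjoin K S := by rw [htop]; trivial
      obtain ⟨r, s, hrs⟩ := (IntermediateField.mem_adjoin_iff K z).mp hz
      by_cases hs : MvPolynomial.aeval (Subtype.val : S → L) s = 0
      · refine ⟨⟨0, 1⟩, ?_⟩
        simp only [OneMemClass.coe_one, map_one, mul_one, map_zero]
        rw [hrs, hs, div_zero]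
      · refine ⟨⟨r, ⟨s, mem_nonZeroDivisors_of_ne_zero fun h0 => hs (by rw [h0, map_zero])⟩⟩, ?_⟩
        show z * algebraMap _ _ s = algebraMap _ _ r
        rw [halg, hrs]
        exact div_mul_cancel₀ _ hs
    · intro x y h
      exact ⟨1, by rw [hinj h]⟩
  haveI : IsIntegrallyClosed (MvPolynomial S K) := inferInstance
  have hint : IsIntegral (MvPolynomial S K) u :=
    IsIntegral.tower_top (isAlgebraic_iff_isIntegral.mp hu)
  obtain ⟨p, hp⟩ := IsIntegrallyClosed.isIntegral_iff.mp hint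
  by_cases hu0 : u = 0
  · exact ⟨0, by simp [hu0]⟩
  have hint' : IsIntegral (MvPolynomial S K) u⁻¹ :=
    IsIntegral.tower_top (isAlgebraic_iff_isIntegral.mp hu.inv)
  obtain ⟨q, hq⟩ := IsIntegrallyClosed.isIntegral_iff.mp hint'
  have hpq : p * q = 1 := hinj (by rw [map_mul, hp, hq, map_one, mul_inv_cancel₀ hu0])
  obtain ⟨c, hc⟩ := mv_isUnit_C' p q hpq
  refine ⟨c, ?_⟩
  rw [← hp, hc]
  rw [show (MvPolynomial.C c : MvPolynomial S K) = algebraMap K _ c from rfl,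
    ← IsScalarTower.algebraMap_apply]

private lemma strong_all' {K L : Type*} [Field K] [Field L] [Algebra K L]
    {A B : Submodule K L}
    (hmul : ∀ x : L, (∃ a ∈ A, ∃ b ∈ B, x = a * b) → x ∈ A → x = 0)
    (f : A ≃ₗ[K] B) : IsStrongMatching f := by
  intro v i y hyB hex
  obtain ⟨x, hxA, hy⟩ := hex
  have hvi : ((v i : A) : L) ≠ 0 := fun h0 => (v.ne_zero i) (ZeroMemClass.coe_eq_zero.mp h0)
  have hx0 : x = 0 :=
    hmul x ⟨((v i : A) : L), (v i : A).2, y, hyB, by rw [hy, mul_inv_cancel_left₀ hvi]⟩ hxA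
  rw [hy, hx0, mul_zero]
  exact Submodule.zero_mem _

private lemma rigid' {K L : Type*} [Field K] [Field L] [Algebra K L]
    (hKL : IsPurelyTranscendental K L) {A B : Submodule K L} [FiniteDimensional K A]
    {a₀ : A} (ha₀ : (a₀ : L) ≠ 0)
    (f g : A ≃ₗ[K] B) (φ : A ≃ₗ[K] A)
    (hφ : ∀ a : A, (a : L) * ((g a : ↥B) : L) = ((φ a : ↥A) : L) * ((f (φ a) : ↥B) : L))
    (HF : ∀ v : L, v ≠ 0 → (∀ a : A, ((f (φ a) : ↥B) : L) = v * a) →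
      ∃ k : K, k ≠ 0 ∧ ∀ a : A, ((φ a : ↥A) : L) = algebraMap K L k * a) :
    ∃ c : K, ∀ a : A, ((f a : ↥B) : L) = algebraMap K L c * ((g a : ↥B) : L) := by
  classical
  set Φ : A → L := fun a => ((φ a : ↥A) : L) with hΦdef
  set F : A → L := fun a => ((f (φ a) : ↥B) : L) with hFdef
  have hφ' : ∀ a : A, (a : L) * ((g a : ↥B) : L) = Φ a * F a := hφ
  -- polarized identity
  have polar : ∀ a b : A, (a : L) * ((g b : ↥B) : L) + (b : L) * ((g a : ↥B) : L) =
      Φ a * F b + Φ b * F a := by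
    intro a b
    have h0 := hφ' (a + b)
    have h1 := hφ' a
    have h2 := hφ' b
    have e1 : ((a + b : A) : L) = (a : L) + (b : L) := rfl
    have e2 : ((g (a + b) : ↥B) : L) = ((g a : ↥B) : L) + ((g b : ↥B) : L) := by
      rw [map_add]; rfl
    have e3 : Φ (a + b) = Φ a + Φ b := by
      simp only [hΦdef, map_add]; rfl
    have e4 : F (a + b) = F a + F b := by
      simp only [hFdef, map_add]; rfl
    rw [e1, e2, e3, e4] at h0
    linear_combination h0 - h1 - h2
  have key : ∀ a b : A, ((a : L) * Φ b - (b : L) * Φ a) * ((a : L) * F b - (b : L) * F a) = 0 := by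
    intro a b
    linear_combination (a : L) * (b : L) * polar a b - (a : L) ^ 2 * hφ' b - (b : L) ^ 2 * hφ' a
  -- the concluding computation
  have conclude : ∀ k : K, k ≠ 0 → (∀ a : A, Φ a = algebraMap K L k * a) →
      ∃ c : K, ∀ a : A, ((f a : ↥B) : L) = algebraMap K L c * ((g a : ↥B) : L) := by
    intro k hk hkφ
    have hkL : algebraMap K L k ≠ 0 :=
      fun hh => hk ((algebraMap K L).injective (by rw [hh, map_zero]))
    refine ⟨(k * k)⁻¹, fun a => ?_⟩
    by_cases ha : (a : L) = 0
    · have : a = 0 := ZeroMemClass.coe_eq_zero.mp ha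
      rw [this]
      simp
    · have hφa : φ a = k • a := by
        apply Subtype.ext
        rw [Submodule.coe_smul, Algebra.smul_def]
        exact hkφ a
      have h1 := hφ a
      rw [hφa, map_smul] at h1
      have h2 : ((g a : ↥B) : L) = algebraMap K L (k * k) * ((f a : ↥B) : L) := by
        apply mul_left_cancel₀ ha
        rw [h1, Submodule.coe_smul, Submodule.coe_smul, Algebra.smul_def, Algebra.smul_def,
          map_mul]
        ring
      rw [h2, map_inv₀, map_mul]
      rw [inv_mul_cancel_left₀ (by exact mul_ne_zero hkL hkL)]
  by_cases hE1 : ∀ a b : A, (a : L) * Φ b = (b : L) * Φ a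
  · -- φ is multiplication by a constant
    have hΦa₀ : Φ a₀ ≠ 0 := by
      intro h0
      have h1 : φ a₀ = 0 := ZeroMemClass.coe_eq_zero.mp h0
      have h2 : a₀ = 0 := by
        have := φ.injective (by rw [h1, map_zero] : φ a₀ = φ 0)
        exact this
      exact ha₀ (by rw [h2]; rfl)
    set u := Φ a₀ / (a₀ : L) with hu_def
    have hune : u ≠ 0 := div_ne_zero hΦa₀ ha₀
    have hu : ∀ a : A, Φ a = u * a := by
      intro a
      rw [hu_def, div_mul_eq_mul_div, eq_div_iff ha₀]
      linear_combination hE1 a₀ a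
    have humem : ∀ x ∈ A, u * x ∈ A := by
      intro x hx
      rw [show u * x = Φ ⟨x, hx⟩ from (hu ⟨x, hx⟩).symm]
      exact (φ ⟨x, hx⟩).2
    have halg := alg_of_mul_mem' A a₀.2 ha₀ u humem
    obtain ⟨k, hk⟩ := alg_mem_range' hKL halg
    have hkne : k ≠ 0 := fun h0 => hune (by rw [← hk, h0, map_zero])
    exact conclude k hkne (fun a => by rw [hu a, ← hk])
  · push_neg at hE1
    obtain ⟨a₁, a₂, h12⟩ := hE1
    have ha₁ : (a₁ : L) ≠ 0 := by
      intro h0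
      apply h12
      have e0 : a₁ = 0 := ZeroMemClass.coe_eq_zero.mp h0
      rw [e0]
      simp [hΦdef]
    have ha₂ : (a₂ : L) ≠ 0 := by
      intro h0
      apply h12
      have e0 : a₂ = 0 := ZeroMemClass.coe_eq_zero.mp h0
      rw [e0]
      simp [hΦdef]
    have hor : ∀ a b : A, (a : L) * Φ b = (b : L) * Φ a ∨ (a : L) * F b = (b : L) * F a := by
      intro a b
      rcases mul_eq_zero.mp (key a b) with h | h
      · exact Or.inl (sub_eq_zero.mp h)
      · exact Or.inr (sub_eq_zero.mp h)
    have hQ12 : (a₁ : L) * F a₂ = (a₂ : L) * F a₁ := (hor a₁ a₂).resolve_left h12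
    have hQ1 : ∀ x : A, (x : L) ≠ 0 → (x : L) * F a₁ = (a₁ : L) * F x := by
      intro x hx
      rcases hor x a₁ with hP | hQ
      · have hP2 : ¬((x : L) * Φ a₂ = (a₂ : L) * Φ x) := by
          intro hP2
          apply h12
          apply mul_left_cancel₀ hx
          linear_combination (a₁ : L) * hP2 - (a₂ : L) * hP
        have hQ2 : (x : L) * F a₂ = (a₂ : L) * F x := (hor x a₂).resolve_left hP2
        apply mul_left_cancel₀ ha₂
        linear_combination (a₁ : L) * hQ2 - (x : L) * hQ12
      · exact hQ
    have hE2 : ∀ a b : A, (a : L) * F b = (b : L) * F a := by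
      intro a b
      by_cases haz : (a : L) = 0
      · have e0 : a = 0 := ZeroMemClass.coe_eq_zero.mp haz
        rw [e0]
        simp [hFdef]
      by_cases hbz : (b : L) = 0
      · have e0 : b = 0 := ZeroMemClass.coe_eq_zero.mp hbz
        rw [e0]
        simp [hFdef]
      have hqa := hQ1 a haz
      have hqb := hQ1 b hbz
      apply mul_left_cancel₀ ha₁
      linear_combination (b : L) * hqa - (a : L) * hqb
    have hFa₀ : F a₀ ≠ 0 := by
      intro h0
      have h1 : f (φ a₀) = 0 := ZeroMemClass.coe_eq_zero.mp h0
      have h2 : φ a₀ = 0 := f.injective (by rw [h1, map_zero])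
      have h3 : a₀ = 0 := φ.injective (by rw [h2, map_zero])
      exact ha₀ (by rw [h3]; rfl)
    set v := F a₀ / (a₀ : L) with hv_def
    have hvne : v ≠ 0 := div_ne_zero hFa₀ ha₀
    have hv : ∀ a : A, F a = v * a := by
      intro a
      rw [hv_def, div_mul_eq_mul_div, eq_div_iff ha₀]
      linear_combination hE2 a₀ a
    obtain ⟨k, hkne, hkφ⟩ := HF v hvne hv
    exact conclude k hkne hkφ

/-- A purely transcendental field extension `K ⊆ L` satisfies the linear acyclic matching
property: for every pair `A`, `B` of nonzero `K`-subspaces of `L` of the same finite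
dimension with `AB ∩ A = {0}`, there is at least one acyclic matching from `A` to `B`. -/
theorem stmt17 {K L : Type*} [Field K] [Field L] [Algebra K L]
    (hKL : IsPurelyTranscendental K L) :
    ∀ A B : Submodule K L, A ≠ ⊥ → B ≠ ⊥ →
      FiniteDimensional K A → FiniteDimensional K B →
      Module.finrank K A = Module.finrank K B →
      (∀ x : L, (∃ a ∈ A, ∃ b ∈ B, x = a * b) → x ∈ A → x = 0) →
      ∃ f : A ≃ₗ[K] B, IsAcyclicLinearMatching f := by
  intro A B hA hB hFA hFB hrank hmul
  haveI := hFA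
  haveI := hFB
  obtain ⟨a₀L, ha₀A, ha₀ne⟩ := (Submodule.ne_bot_iff A).mp hA
  set a₀ : A := ⟨a₀L, ha₀A⟩ with ha₀def
  have ha₀ : (a₀ : L) ≠ 0 := ha₀ne
  by_cases hex : ∃ v₀ : L, v₀ ≠ 0 ∧ Submodule.map (LinearMap.mulLeft K v₀) A = B
  · obtain ⟨v₀, hv₀ne, hv₀map⟩ := hex
    let e : L ≃ₗ[K] L :=
      { toFun := fun x => v₀ * x
        invFun := fun x => v₀⁻¹ * x
        map_add' := fun x y => by ring
        map_smul' := fun c x => by simp [mul_smul_comm]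
        left_inv := fun x => by field_simp
        right_inv := fun x => by field_simp }
    have hemap : Submodule.map (e : L →ₗ[K] L) A = B := by
      rw [show (e : L →ₗ[K] L) = LinearMap.mulLeft K v₀ from by
        ext x; simp [e, LinearMap.mulLeft_apply]]
      exact hv₀map
    let f : A ≃ₗ[K] B := (e.submoduleMap A).trans (LinearEquiv.ofEq _ B hemap)
    have hf : ∀ a : A, ((f a : ↥B) : L) = v₀ * a := fun a => rfl
    refine ⟨f, strong_all' hmul f, ?_⟩
    intro g hgs hequiv
    obtain ⟨φ, hφ⟩ := hequiv
    refine rigid' hKL ha₀ f g φ hφ ?_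
    intro v hvne hvf
    have hw : ∀ a : A, ((φ a : ↥A) : L) = (v / v₀) * a := by
      intro a
      have h1 := hvf a
      rw [hf (φ a)] at h1
      rw [div_mul_eq_mul_div, eq_comm, div_eq_iff hv₀ne]
      linear_combination -h1
    have hwmem : ∀ x ∈ A, (v / v₀) * x ∈ A := by
      intro x hx
      rw [show (v / v₀) * x = ((φ ⟨x, hx⟩ : ↥A) : L) from (hw ⟨x, hx⟩).symm]
      exact (φ ⟨x, hx⟩).2
    have halg := alg_of_mul_mem' A a₀.2 ha₀ (v / v₀) hwmem
    obtain ⟨k, hk⟩ := alg_mem_range' hKL halg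
    have hkne : k ≠ 0 := fun h0 => (div_ne_zero hvne hv₀ne) (by rw [← hk, h0, map_zero])
    exact ⟨k, hkne, fun a => by rw [hw a, ← hk]⟩
  · have f := (FiniteDimensional.nonempty_linearEquiv_of_finrank_eq hrank).some
    refine ⟨f, strong_all' hmul f, ?_⟩
    intro g hgs hequiv
    obtain ⟨φ, hφ⟩ := hequiv
    refine rigid' hKL ha₀ f g φ hφ ?_
    intro v hvne hvf
    exfalso
    apply hex
    refine ⟨v, hvne, ?_⟩
    apply le_antisymm
    · rintro _ ⟨x, hx, rfl⟩
      rw [show (LinearMap.mulLeft K v) x = v * x from rfl, ← hvf ⟨x, hx⟩]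
      exact (f (φ ⟨x, hx⟩)).2
    · intro b hb
      refine ⟨((φ.symm (f.symm ⟨b, hb⟩) : ↥A) : L), (φ.symm (f.symm ⟨b, hb⟩)).2, ?_⟩
      have h1 := hvf (φ.symm (f.symm ⟨b, hb⟩))
      rw [φ.apply_symm_apply, f.apply_symm_apply] at h1
      rw [show (LinearMap.mulLeft K v) _ = v * ((φ.symm (f.symm ⟨b, hb⟩) : ↥A) : L) from rfl]
      rw [← h1]
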